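/- arXiv:1506.03170 — 4 statements merged into one kernel-verified Lean document; each statement's English description precedes it below -/
import Mathlib

section
/- For every orientation D of a graph G with chromatic number 3, there is a proper 3-coloring f of G such that D contains a directed path of order 3 whose three vertices receive three distinct colors. -/
/-- For every orientation `D` of a graph `G` of chromatic number `3`, there is a
proper `3`-coloring `f` of `G` such that `D` contains a directed path of order `3`
whose three vertices receive three distinct colors. -/
theorem stmt2 {V : Type*} [Fintype V] (G : SimpleGraph V) (D : V → V → Prop)
    (horient₁ : ∀ u v : V, G.Adj u v ↔ (D u v ∨ D v u))
    (horient₂ : ∀ u v : V, ¬ (D u v ∧ D v u))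
    (hchrom : G.chromaticNumber = 3) :
    ∃ f : V → Fin 3,
      (∀ u v : V, G.Adj u v → f u ≠ f v) ∧
      ∃ a b c : V, D a b ∧ D b c ∧ f a ≠ f b ∧ f b ≠ f c ∧ f a ≠ f c := by
  classical
  by_contra hcon
  push_neg at hcon
  -- hcon : ∀ f, proper → ∀ a b c, D a b → D b c → f a ≠ f b → f b ≠ f c → f a = f c
  -- a proper 3-coloring exists
  have hcol : G.Colorable 3 := by
    rw [← SimpleGraph.chromaticNumber_le_iff_colorable, hchrom]
    exact le_refl _
  obtain ⟨C⟩ := hcol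
  set f₀ : V → Fin 3 := fun v => C v with hf₀def
  have hf₀ : ∀ u v : V, G.Adj u v → f₀ u ≠ f₀ v := fun u v h => C.valid h
  -- "Mid" vertices have both an in-edge and an out-edge
  -- monochromatic neighborhood lemma
  have mono : ∀ f : V → Fin 3, (∀ u v : V, G.Adj u v → f u ≠ f v) →
      ∀ v p q : V, ((∃ u, D u v) ∧ (∃ w, D v w)) → G.Adj v p → G.Adj v q → f p = f q := by
    intro f hf v p q ⟨⟨i, hi⟩, ⟨o, ho⟩⟩ hvp hvq
    have key : ∀ x y : V, D x v → D v y → f x = f y := by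
      intro x y hx hy
      have hadjx : G.Adj x v := (horient₁ x v).mpr (Or.inl hx)
      have hadjy : G.Adj v y := (horient₁ v y).mpr (Or.inl hy)
      exact hcon f hf x v y hx hy (hf x v hadjx) (hf v y hadjy)
    rcases (horient₁ v p).mp hvp with hp | hp
    · rcases (horient₁ v q).mp hvq with hq | hq
      · -- p out, q out
        exact (key i p hi hp).symm.trans (key i q hi hq)
      · -- p out, q in
        exact (key q p hq hp).symm
    · rcases (horient₁ v q).mp hvq with hq | hq
      · -- p in, q out
        exact key p q hp hq
      · -- p in, q in
        exact (key p o hp ho).trans (key q o hq ho).symm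
  -- no two mid vertices are adjacent
  have step2 : ∀ a b : V, ((∃ u, D u a) ∧ (∃ w, D a w)) → ((∃ u, D u b) ∧ (∃ w, D b w)) →
      ¬ G.Adj a b := by
    intro a b hma hmb hab
    have hne : f₀ a ≠ f₀ b := hf₀ a b hab
    have hz : ∃ z : Fin 3, z ≠ f₀ a ∧ z ≠ f₀ b := by
      revert hne
      generalize f₀ a = x; generalize f₀ b = y
      revert x y; decide
    obtain ⟨z, hza, hzb⟩ := hz
    set g : V → Fin 3 := fun v => if v = a then z else f₀ v with hgdef
    have hga : g a = z := by simp [hgdef]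
    have hgne : ∀ v : V, v ≠ a → g v = f₀ v := by
      intro v hv; simp [hgdef, hv]
    -- g is proper: all neighbors of a have color f₀ b
    have hnbra : ∀ w : V, G.Adj a w → f₀ w = f₀ b := fun w hw =>
      mono f₀ hf₀ a w b hma hw hab
    have hg : ∀ u v : V, G.Adj u v → g u ≠ g v := by
      intro u v huv
      by_cases hu : u = a
      · have hv : v ≠ a := fun h => huv.ne (hu.trans h.symm)
        rw [hu, hga, hgne v hv, hnbra v (hu ▸ huv)]
        exact hzb
      · by_cases hv : v = a
        · rw [hgne u hu, hv, hga, hnbra u (hv ▸ huv.symm)]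
          exact fun h => hzb h.symm
        · rw [hgne u hu, hgne v hv]
          exact hf₀ u v huv
    have hbna : b ≠ a := fun h => G.loopless.irrefl a (h ▸ hab.symm)
    rcases (horient₁ a b).mp hab with hD | hD
    · -- path a → b → o
      obtain ⟨o, ho⟩ := hmb.2
      have hoa : o ≠ a := fun h => horient₂ a b ⟨hD, h ▸ ho⟩
      have hfo : f₀ o = f₀ a :=
        mono f₀ hf₀ b o a hmb ((horient₁ b o).mpr (Or.inl ho)) hab.symm
      have := hcon g hg a b o hD ho
        (by rw [hga, hgne b hbna]; exact hzb)
        (by rw [hgne b hbna, hgne o hoa, hfo]; exact fun h => hne h.symm)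
      rw [hga, hgne o hoa, hfo] at this
      exact hza this
    · -- path i → b → a
      obtain ⟨i, hi⟩ := hmb.1
      have hia : i ≠ a := fun h => horient₂ a b ⟨h ▸ hi, hD⟩
      have hfi : f₀ i = f₀ a :=
        mono f₀ hf₀ b i a hmb ((horient₁ b i).mpr (Or.inr hi)) hab.symm
      have := hcon g hg i b a hi hD
        (by rw [hgne i hia, hgne b hbna, hfi]; exact hne)
        (by rw [hgne b hbna, hga]; exact fun h => hzb h.symm)
      rw [hgne i hia, hga, hfi] at this
      exact hza this.symm
  -- the type coloring
  set c : V → Fin 3 := fun v => if ∃ u, D u v then (if ∃ w, D v w then 2 else 1) else 0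
    with hcdef
  have hc0 : ∀ v : V, ¬ (∃ u, D u v) → c v = 0 := by intro v h; simp [hcdef, h]
  have hc1 : ∀ v : V, (∃ u, D u v) → ¬ (∃ w, D v w) → c v = 1 := by
    intro v h h'; simp [hcdef, h, h']
  have hc2 : ∀ v : V, (∃ u, D u v) → (∃ w, D v w) → c v = 2 := by
    intro v h h'; simp [hcdef, h, h']
  -- c is proper
  have hcd : ∀ u v : V, D u v → c u ≠ c v := by
    intro u v hD
    have hvin : ∃ x, D x v := ⟨u, hD⟩
    have huout : ∃ x, D u x := ⟨v, hD⟩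
    have hadj : G.Adj u v := (horient₁ u v).mpr (Or.inl hD)
    by_cases huin : ∃ x, D x u
    · -- u is mid, so v is not mid
      have hvnotout : ¬ ∃ x, D v x := by
        intro hvout
        exact step2 u v ⟨huin, huout⟩ ⟨hvin, hvout⟩ hadj
      rw [hc2 u huin huout, hc1 v hvin hvnotout]
      decide
    · rw [hc0 u huin]
      by_cases hvout : ∃ x, D v x
      · rw [hc2 v hvin hvout]; decide
      · rw [hc1 v hvin hvout]; decide
  have hc : ∀ u v : V, G.Adj u v → c u ≠ c v := by
    intro u v huv
    rcases (horient₁ u v).mp huv with h | h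
    · exact hcd u v h
    · exact (hcd v u h).symm
  by_cases hM : ∃ m : V, (∃ u, D u m) ∧ (∃ w, D m w)
  · obtain ⟨m, ⟨a, ha⟩, ⟨b, hb⟩⟩ := hM
    have hmin : ∃ u, D u m := ⟨a, ha⟩
    have hmout : ∃ w, D m w := ⟨b, hb⟩
    have hca : c a = 0 := by
      apply hc0
      intro hain
      exact step2 a m ⟨hain, ⟨m, ha⟩⟩ ⟨hmin, hmout⟩ ((horient₁ a m).mpr (Or.inl ha))
    have hcm : c m = 2 := hc2 m hmin hmout
    have hcb : c b = 1 := by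
      apply hc1 b ⟨m, hb⟩
      intro hbout
      exact step2 m b ⟨hmin, hmout⟩ ⟨⟨m, hb⟩, hbout⟩ ((horient₁ m b).mpr (Or.inl hb))
    have := hcon c hc a m b ha hb (by rw [hca, hcm]; decide) (by rw [hcm, hcb]; decide)
    rw [hca, hcb] at this
    exact absurd this (by decide)
  · -- no mid vertex: G is 2-colorable, contradiction with χ = 3
    push_neg at hM
    set f2 : V → Fin 2 := fun v => if ∃ u, D u v then 1 else 0 with hf2def
    have hf2 : ∀ u v : V, G.Adj u v → f2 u ≠ f2 v := by
      intro u v huv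
      have key : ∀ x y : V, D x y → f2 x ≠ f2 y := by
        intro x y hD
        have hyin : ∃ z, D z y := ⟨x, hD⟩
        have hxnotin : ¬ ∃ z, D z x := fun h => hM x h y hD
        simp only [hf2def]
        rw [if_pos hyin, if_neg hxnotin]
        decide
      rcases (horient₁ u v).mp huv with h | h
      · exact key u v h
      · exact (key v u h).symm
    have h2 : G.Colorable 2 :=
      Nonempty.intro (SimpleGraph.Coloring.mk f2 (fun {u v} h => hf2 u v h))
    have hle : G.chromaticNumber ≤ 2 := h2.chromaticNumber_le
    rw [hchrom] at hle
    norm_num at hle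
end

section
/- Let G be a graph with proper k-coloring f, let D_f be the digraph with arcs (u,v) for edges uv with f(v) ≡ f(u)+1 (mod k), and let X ⊆ V(G). Let V_f^+(X) be the set of vertices reachable in D_f by a directed path from some vertex of X (including X itself). Then the function f_X^+ defined by f_X^+(u) = f(u)+1 (mod k) for u ∈ V_f^+(X) and f_X^+(u) = f(u) otherwise is again a proper k-coloring of G. -/
/-- Let `f` be a proper coloring of `G` with colors in `ZMod k`, let `D_f` have arcs
`(u,v)` for edges `uv` with `f v = f u + 1`, and let `X ⊆ V`. If `g` agrees with
`f + 1` on the set `V_f^+(X)` of vertices reachable in `D_f` from `X` (reachability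
includes trivial paths) and with `f` elsewhere, then `g` is again a proper coloring. -/
theorem stmt4 {V : Type*} (G : SimpleGraph V) (k : ℕ)
    (f : V → ZMod k) (hf : ∀ u v : V, G.Adj u v → f u ≠ f v)
    (X : Set V) (g : V → ZMod k)
    (hg₁ : ∀ u : V,
      (∃ x ∈ X, Relation.ReflTransGen (fun a b => G.Adj a b ∧ f b = f a + 1) x u) →
      g u = f u + 1)
    (hg₂ : ∀ u : V,
      ¬ (∃ x ∈ X, Relation.ReflTransGen (fun a b => G.Adj a b ∧ f b = f a + 1) x u) →
      g u = f u) :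
    ∀ u v : V, G.Adj u v → g u ≠ g v := by
  intro u v huv
  by_cases hu : ∃ x ∈ X, Relation.ReflTransGen (fun a b => G.Adj a b ∧ f b = f a + 1) x u <;>
  by_cases hv : ∃ x ∈ X, Relation.ReflTransGen (fun a b => G.Adj a b ∧ f b = f a + 1) x v
  · rw [hg₁ u hu, hg₁ v hv]
    intro h
    exact hf u v huv (by linear_combination h)
  · rw [hg₁ u hu, hg₂ v hv]
    intro h
    obtain ⟨x, hx, hr⟩ := hu
    exact hv ⟨x, hx, hr.tail ⟨huv, h.symm⟩⟩
  · rw [hg₂ u hu, hg₁ v hv]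
    intro h
    obtain ⟨x, hx, hr⟩ := hv
    exact hu ⟨x, hx, hr.tail ⟨huv.symm, h⟩⟩
  · rw [hg₂ u hu, hg₂ v hv]
    exact hf u v huv
end

section
/- Let G be a graph with proper k-coloring f, let D_f be the digraph with arcs (u,v) for edges uv with f(v) ≡ f(u)+1 (mod k), and let X ⊆ V(G). Let V_f^-(X) be the set of vertices y such that D_f contains a directed path from y to some vertex of X. Then the function f_X^- defined by f_X^-(u) = f(u)-1 (mod k) for u ∈ V_f^-(X) and f_X^-(u) = f(u) otherwise is again a proper k-coloring of G. -/
/-- Let `f` be a proper coloring of `G` with colors in `ZMod k`, let `D_f` have arcs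
`(u,v)` for edges `uv` with `f v = f u + 1`, and let `X ⊆ V`. If `g` agrees with
`f - 1` on the set `V_f^-(X)` of vertices from which some vertex of `X` is reachable
in `D_f` (reachability includes trivial paths) and with `f` elsewhere, then `g` is
again a proper coloring. -/
theorem stmt5 {V : Type*} (G : SimpleGraph V) (k : ℕ)
    (f : V → ZMod k) (hf : ∀ u v : V, G.Adj u v → f u ≠ f v)
    (X : Set V) (g : V → ZMod k)
    (hg₁ : ∀ u : V,
      (∃ x ∈ X, Relation.ReflTransGen (fun a b => G.Adj a b ∧ f b = f a + 1) u x) →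
      g u = f u - 1)
    (hg₂ : ∀ u : V,
      ¬ (∃ x ∈ X, Relation.ReflTransGen (fun a b => G.Adj a b ∧ f b = f a + 1) u x) →
      g u = f u) :
    ∀ u v : V, G.Adj u v → g u ≠ g v := by
  intro u v huv
  by_cases hu : ∃ x ∈ X, Relation.ReflTransGen (fun a b => G.Adj a b ∧ f b = f a + 1) u x <;>
  by_cases hv : ∃ x ∈ X, Relation.ReflTransGen (fun a b => G.Adj a b ∧ f b = f a + 1) v x
  · rw [hg₁ u hu, hg₁ v hv]
    intro h; exact hf u v huv (by linear_combination h)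
  · rw [hg₁ u hu, hg₂ v hv]
    intro h
    obtain ⟨x, hx, hpath⟩ := hu
    exact hv ⟨x, hx, Relation.ReflTransGen.head ⟨huv.symm, by linear_combination h⟩ hpath⟩
  · rw [hg₂ u hu, hg₁ v hv]
    intro h
    obtain ⟨x, hx, hpath⟩ := hv
    exact hu ⟨x, hx, Relation.ReflTransGen.head ⟨huv, by linear_combination -h⟩ hpath⟩
  · rw [hg₂ u hu, hg₂ v hv]
    exact hf u v huv
end

section
/- Let D be an orientation of a triangle-free graph G with chromatic number 3, and suppose the set R of vertices of D with positive in-degree and positive out-degree is an independent set in G. Then the function f assigning color 1 to sources (in-degree 0 vertices), color 2 to vertices of R, and color 3 to sinks (out-degree 0 vertices) is a proper 3-coloring of G, and every vertex of R lies on a directed path of order 3 with three distinct colors. -/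
/-- Let `D` be an orientation of a triangle-free graph `G` of chromatic number `3`,
and suppose the set `R` of vertices with positive in-degree and positive out-degree
is independent in `G`. Then the function `f` assigning color `1` to sources, `2` to
vertices of `R`, and `3` to sinks is a proper `3`-coloring of `G`, and every vertex
of `R` lies on a directed path of order `3` with three distinct colors. -/
theorem stmt11 {V : Type*} [Fintype V] (G : SimpleGraph V) (D : V → V → Prop)
    (horient₁ : ∀ u v : V, G.Adj u v ↔ (D u v ∨ D v u))
    (horient₂ : ∀ u v : V, ¬ (D u v ∧ D v u))
    (htrianglefree : G.CliqueFree 3)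
    (hchrom : G.chromaticNumber = 3)
    (hRindep : ∀ u v : V,
      ((∃ x, D x u) ∧ (∃ y, D u y)) → ((∃ x, D x v) ∧ (∃ y, D v y)) →
      ¬ G.Adj u v)
    (f : V → ℕ)
    (hf₁ : ∀ u : V, (¬ ∃ x, D x u) → f u = 1)
    (hf₂ : ∀ u : V, ((∃ x, D x u) ∧ (∃ y, D u y)) → f u = 2)
    (hf₃ : ∀ u : V, (¬ ∃ y, D u y) → f u = 3) :
    (∀ u v : V, G.Adj u v → f u ≠ f v) ∧
    (∀ u : V, ((∃ x, D x u) ∧ (∃ y, D u y)) →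
      ∃ a b c : V, D a b ∧ D b c ∧ (u = a ∨ u = b ∨ u = c) ∧
        f a ≠ f b ∧ f b ≠ f c ∧ f a ≠ f c) := by
  -- Classification of every vertex
  have hclass : ∀ u : V,
      (f u = 1 ∧ ¬ ∃ x, D x u)
      ∨ (f u = 2 ∧ ((∃ x, D x u) ∧ ∃ y, D u y))
      ∨ (f u = 3 ∧ ¬ ∃ y, D u y) := by
    intro u
    by_cases hin : ∃ x, D x u
    · by_cases hout : ∃ y, D u y
      · exact Or.inr (Or.inl ⟨hf₂ u ⟨hin, hout⟩, hin, hout⟩)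
      · exact Or.inr (Or.inr ⟨hf₃ u hout, hout⟩)
    · exact Or.inl ⟨hf₁ u hin, hin⟩
  -- Key: an arc forces distinct colors
  have key : ∀ a b : V, D a b → f a ≠ f b := by
    intro a b hab heq
    have hadj : G.Adj a b := (horient₁ a b).mpr (Or.inl hab)
    rcases hclass a with ⟨fa, _⟩ | ⟨fa, hRa⟩ | ⟨fa, hna⟩
    · rcases hclass b with ⟨fb, hnb⟩ | ⟨fb, _⟩ | ⟨fb, _⟩
      · exact hnb ⟨a, hab⟩
      · omega
      · omega
    · rcases hclass b with ⟨fb, hnb⟩ | ⟨fb, hRb⟩ | ⟨fb, _⟩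
      · exact hnb ⟨a, hab⟩
      · exact hRindep a b hRa hRb hadj
      · omega
    · exact hna ⟨b, hab⟩
  constructor
  · intro u v huv heq
    rcases (horient₁ u v).mp huv with h | h
    · exact key u v h heq
    · exact key v u h heq.symm
  · rintro u ⟨⟨x, hx⟩, ⟨y, hy⟩⟩
    have hu2 : f u = 2 := hf₂ u ⟨⟨x, hx⟩, ⟨y, hy⟩⟩
    have hx1 : f x = 1 := by
      rcases hclass x with ⟨fx, _⟩ | ⟨fx, hRx⟩ | ⟨fx, hnx⟩
      · exact fx
      · exact absurd ((horient₁ x u).mpr (Or.inl hx))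
          (hRindep x u hRx ⟨⟨x, hx⟩, ⟨y, hy⟩⟩)
      · exact absurd ⟨u, hx⟩ hnx
    have hy3 : f y = 3 := by
      rcases hclass y with ⟨fy, hny⟩ | ⟨fy, hRy⟩ | ⟨fy, _⟩
      · exact absurd ⟨u, hy⟩ hny
      · exact absurd ((horient₁ u y).mpr (Or.inl hy))
          (hRindep u y ⟨⟨x, hx⟩, ⟨y, hy⟩⟩ hRy)
      · exact fy
    exact ⟨x, u, y, hx, hy, Or.inr (Or.inl rfl), by omega, by omega, by omega⟩
end
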